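/- (Bregman distance bound for finite rank operators) Let X, Y be Hilbert spaces, K : X → Y bounded linear with finite dimensional range, R : X → [0,∞) Lipschitz with constant L and Gâteaux differentiable at an R-minimizing solution x‡ of Kx = Kx‡, with R'(x‡) vanishing on ker(K), and let a > 0 satisfy ‖Kz‖ ≥ a‖z‖ for z ∈ ker(K)^⊥. Then for all x ∈ X, the absolute Bregman distance satisfies Δ_R(x, x‡) ≤ R(x) − R(x‡) + ((2L + ‖R'(x‡)‖)/a)·‖Kx − Kx‡‖. -/

import Mathlib

open Filter Topology

theorem bregman_distance_bound_finite_rank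
    {X : Type*} [NormedAddCommGroup X] [InnerProductSpace ℝ X] [CompleteSpace X]
    {Y : Type*} [NormedAddCommGroup Y] [InnerProductSpace ℝ Y] [CompleteSpace Y]
    (K : X →L[ℝ] Y)
    (hfin : FiniteDimensional ℝ (LinearMap.range K.toLinearMap))
    (R : X → ℝ) (hRnonneg : ∀ x, 0 ≤ R x)
    (L : ℝ) (hL : 0 ≤ L)
    (hLip : ∀ x x' : X, |R x - R x'| ≤ L * ‖x - x'‖)
    (xdag : X) (hmin : ∀ x : X, K x = K xdag → R xdag ≤ R x)
    (a : ℝ) (ha : 0 < a)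
    (hlb : ∀ z : X, z ∈ (LinearMap.ker K.toLinearMap)ᗮ → a * ‖z‖ ≤ ‖K z‖)
    (R' : X →L[ℝ] ℝ)
    (hGateaux : ∀ h : X,
      Tendsto (fun t : ℝ => (R (xdag + t • h) - R xdag) / t)
        (nhdsWithin 0 {0}ᶜ) (nhds (R' h)))
    (hker : ∀ h : X, K h = 0 → R' h = 0)
    (Δ : X → ℝ) (hΔ : ∀ x, Δ x = |R x - R xdag - R' (x - xdag)|) :
    ∀ x : X, Δ x ≤ R x - R xdag + ((2 * L + ‖R'‖) / a) * ‖K x - K xdag‖ := by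
  intro x
  set S : Submodule ℝ X := LinearMap.ker K.toLinearMap with hS
  have hSclosed : IsClosed (S : Set X) := ContinuousLinearMap.isClosed_ker K
  haveI : CompleteSpace S := hSclosed.completeSpace_coe
  set h : X := x - xdag with hh
  set q : X := (S.orthogonalProjectionOnto h : X) with hq
  have hqS : q ∈ S := (S.orthogonalProjectionOnto h).2
  set p : X := h - q with hp
  have hpS : p ∈ Sᗮ := S.sub_starProjection_mem_orthogonal h
  have hKq : K q = 0 := hqS
  have hKp : K p = K x - K xdag := by
    simp [hp, hh, map_sub, hKq]
  have hKn : ‖K p‖ = ‖K x - K xdag‖ := by rw [hKp]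
  have hpnorm : a * ‖p‖ ≤ ‖K x - K xdag‖ := by
    have := hlb p hpS
    rwa [hKn] at this
  -- R'(h) = R'(p)
  have hR'h : R' h = R' p := by
    have : R' q = 0 := hker q hKq
    have hhpq : h = p + q := by simp [hp]
    rw [hhpq, map_add, this, add_zero]
  have hR'bound : |R' h| ≤ (‖R'‖ / a) * ‖K x - K xdag‖ := by
    rw [hR'h]
    have h1 : |R' p| ≤ ‖R'‖ * ‖p‖ := by
      have := R'.le_opNorm p
      calc |R' p| = ‖R' p‖ := (Real.norm_eq_abs _).symm
        _ ≤ ‖R'‖ * ‖p‖ := this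
    have h2 : ‖R'‖ * ‖p‖ ≤ (‖R'‖ / a) * ‖K x - K xdag‖ := by
      rw [div_mul_eq_mul_div, le_div_iff₀ ha]
      calc ‖R'‖ * ‖p‖ * a = ‖R'‖ * (a * ‖p‖) := by ring
        _ ≤ ‖R'‖ * ‖K x - K xdag‖ := by
            exact mul_le_mul_of_nonneg_left hpnorm (norm_nonneg _)
    linarith
  -- lower bound for R x - R xdag
  have hmin' : R xdag ≤ R (xdag + q) := by
    apply hmin
    simp [map_add, hKq]
  have hlip' : |R x - R (xdag + q)| ≤ L * ‖p‖ := by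
    have : x - (xdag + q) = p := by simp [hp, hh]; abel
    have h2 := hLip x (xdag + q)
    rwa [this] at h2
  have hlow : -(R x - R xdag) ≤ (L / a) * ‖K x - K xdag‖ := by
    have h1 : R xdag - R x ≤ L * ‖p‖ := by
      have := abs_le.mp hlip'
      linarith
    have h2 : L * ‖p‖ ≤ (L / a) * ‖K x - K xdag‖ := by
      rw [div_mul_eq_mul_div, le_div_iff₀ ha]
      calc L * ‖p‖ * a = L * (a * ‖p‖) := by ring
        _ ≤ L * ‖K x - K xdag‖ := mul_le_mul_of_nonneg_left hpnorm hL
    linarith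
  have habs : |R x - R xdag| ≤ R x - R xdag + 2 * ((L / a) * ‖K x - K xdag‖) := by
    rcases abs_cases (R x - R xdag) with ⟨he, _⟩ | ⟨he, _⟩
    · have : 0 ≤ (L / a) * ‖K x - K xdag‖ := by
        positivity
      linarith
    · linarith
  rw [hΔ x]
  have htri : |R x - R xdag - R' (x - xdag)| ≤ |R x - R xdag| + |R' h| := by
    rw [hh]
    exact abs_sub (R x - R xdag) (R' (x - xdag))
  have : (2 * L + ‖R'‖) / a * ‖K x - K xdag‖
      = 2 * ((L / a) * ‖K x - K xdag‖) + (‖R'‖ / a) * ‖K x - K xdag‖ := by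
    field_simp
  linarith
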